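/- Let $s$ be a positive integer, and let $b,c,t$ be nonnegative integers. Let $k_1,\dots,k_s$ be integers with $1\leq k_i\leq (s-1)c+b+t$ for all $i$. Then at least one of the following holds: (1) $1\leq k_i\leq b$ for some $i$; (2) $-c\leq k_i-k_j\leq c-1$ for some $i<j$; (3) there exist a permutation $w$ of $\{1,\dots,s\}$ and nonnegative integers $t_1,\dots,t_s$ with $k_{w(1)}=b+t_1$, $k_{w(j)}-k_{w(j-1)}=c+t_j$ for $2\leq j\leq s$, $1\leq t_1+\cdots+t_s\leq t$, and $t_j>0$ whenever $w(j-1)<w(j)$ (with the convention $w(0)=0$). -/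

import Mathlib

/-!
The key distribution lemma (Lemma `cor-key` in the paper).
Indices are 0-based: `k i` for `i : Fin s` corresponds to `k_{i+1}`, and the
path listing `w : Equiv.Perm (Fin s)` corresponds to the permutation `w` of
`{1,…,s}`; the convention `w(0)=0` translates into the unconditional
requirement `0 < tt ⟨0,_⟩` for the first step.
-/

open Finset

theorem key_distribution_lemma (s : ℕ) (hs : 1 ≤ s) (b c t : ℕ) (k : Fin s → ℤ)
    (hk : ∀ i, 1 ≤ k i ∧ k i ≤ (((s - 1) * c + b + t : ℕ) : ℤ)) :
    (∃ i, 1 ≤ k i ∧ k i ≤ (b : ℤ)) ∨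
    (∃ i j : Fin s, i < j ∧ -(c : ℤ) ≤ k i - k j ∧ k i - k j ≤ (c : ℤ) - 1) ∨
    (∃ (w : Equiv.Perm (Fin s)) (tt : Fin s → ℕ),
      k (w ⟨0, hs⟩) = (b : ℤ) + tt ⟨0, hs⟩ ∧
      (∀ j : ℕ, (hj : j + 1 < s) →
        k (w ⟨j + 1, hj⟩) - k (w ⟨j, Nat.lt_of_succ_lt hj⟩) = (c : ℤ) + tt ⟨j + 1, hj⟩) ∧
      1 ≤ ∑ j, tt j ∧ ∑ j, tt j ≤ t ∧
      0 < tt ⟨0, hs⟩ ∧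
      (∀ j : ℕ, (hj : j + 1 < s) →
        w ⟨j, Nat.lt_of_succ_lt hj⟩ < w ⟨j + 1, hj⟩ → 0 < tt ⟨j + 1, hj⟩)) := by
  by_cases h1 : ∃ i, 1 ≤ k i ∧ k i ≤ (b : ℤ)
  · exact Or.inl h1
  by_cases h2 : ∃ i j : Fin s, i < j ∧ -(c : ℤ) ≤ k i - k j ∧ k i - k j ≤ (c : ℤ) - 1
  · exact Or.inr (Or.inl h2)
  right; right
  push_neg at h1 h2
  have hb : ∀ i, (b : ℤ) + 1 ≤ k i := by
    intro i
    have := h1 i (hk i).1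
    omega
  set g : Fin s → Lex (ℤ × (Fin s)ᵒᵈ) := fun i => toLex (k i, OrderDual.toDual i) with hg_def
  have hginj : Function.Injective g := by
    intro a b' h
    simpa [hg_def] using congrArg (fun x => OrderDual.ofDual (ofLex x).2) h
  set w := Tuple.sort g with hw_def
  have hmono : StrictMono (g ∘ w) :=
    (Tuple.monotone_sort g).strictMono_of_injective (hginj.comp w.injective)
  have hstep : ∀ a a' : Fin s, g a < g a' →
      (c : ℤ) ≤ k a' - k a ∧ (a < a' → (c : ℤ) + 1 ≤ k a' - k a) := by
    intro a a' hlt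
    have hlt' : k a < k a' ∨ k a = k a' ∧ a' < a := by
      rcases (Prod.Lex.toLex_lt_toLex (x := (k a, OrderDual.toDual a)) (y := (k a', OrderDual.toDual a'))).mp hlt with h | ⟨ha, hb'⟩
      · exact Or.inl h
      · exact Or.inr ⟨ha, OrderDual.toDual_lt_toDual.mp hb'⟩
    rcases lt_trichotomy a a' with hc | hc | hc
    · have hlt2 : k a < k a' := by
        rcases hlt' with h | ⟨_, h⟩
        · exact h
        · exact absurd h (lt_asymm hc)
      by_cases hle : -(c : ℤ) ≤ k a - k a'
      · have := h2 a a' hc hle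
        exact ⟨by omega, fun _ => by omega⟩
      · exact ⟨by omega, fun _ => by omega⟩
    · subst hc; exact absurd hlt (lt_irrefl _)
    · refine ⟨?_, fun h' => absurd h' (lt_asymm hc)⟩
      have hle2 : k a ≤ k a' := by
        rcases hlt' with h | ⟨h, _⟩ <;> omega
      by_cases hle : -(c : ℤ) ≤ k a' - k a
      · have := h2 a' a hc hle
        omega
      · omega
  have hcons : ∀ j : ℕ, (hj : j + 1 < s) →
      ((c : ℤ) ≤ k (w ⟨j + 1, hj⟩) - k (w ⟨j, Nat.lt_of_succ_lt hj⟩) ∧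
        (w ⟨j, Nat.lt_of_succ_lt hj⟩ < w ⟨j + 1, hj⟩ →
          (c : ℤ) + 1 ≤ k (w ⟨j + 1, hj⟩) - k (w ⟨j, Nat.lt_of_succ_lt hj⟩))) :=
    fun j hj => hstep _ _ (hmono (Fin.mk_lt_mk.mpr (Nat.lt_succ_self j)))
  set prev : Fin s → ℤ := fun j =>
    if (j : ℕ) = 0 then (b : ℤ)
    else k (w ⟨(j : ℕ) - 1, Nat.lt_of_le_of_lt (Nat.sub_le _ _) j.isLt⟩) + c with hprev_def
  set tt : Fin s → ℕ := fun j => (k (w j) - prev j).toNat with htt_def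
  have hprev0 : ∀ (h : 0 < s), prev ⟨0, h⟩ = (b : ℤ) := fun h => rfl
  have hprevS : ∀ (j : ℕ) (hj : j + 1 < s),
      prev ⟨j + 1, hj⟩ = k (w ⟨j, Nat.lt_of_succ_lt hj⟩) + c := fun j hj => rfl
  have key : ∀ j : Fin s, ((tt j : ℤ)) = k (w j) - prev j ∧ prev j ≤ k (w j) := by
    intro j
    have h' : prev j ≤ k (w j) := by
      rcases j with ⟨m, hm⟩
      cases m with
      | zero =>
        rw [hprev0 hm]
        have := hb (w ⟨0, hm⟩)
        omega
      | succ n =>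
        rw [hprevS n hm]
        have := (hcons n hm).1
        omega
    exact ⟨Int.toNat_of_nonneg (by omega), h'⟩
  set F : ℕ → ℤ := fun m =>
    if hm : m < s then k (w ⟨m, hm⟩) - prev ⟨m, hm⟩ else 0 with hF_def
  have hsum2 : (∑ j : Fin s, ((tt j : ℤ))) = ∑ j ∈ Finset.range s, F j := by
    rw [← Fin.sum_univ_eq_sum_range F s]
    apply Finset.sum_congr rfl
    intro j _
    have hFj : F (j : ℕ) = k (w j) - prev j := by
      rw [hF_def]
      simp only []
      rw [dif_pos j.isLt]
    rw [(key j).1, hFj]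
  have claim : ∀ n : ℕ, (hn : n < s) →
      ∑ j ∈ Finset.range (n + 1), F j = k (w ⟨n, hn⟩) - (b : ℤ) - (n : ℤ) * c := by
    intro n
    induction n with
    | zero =>
      intro hn
      rw [Finset.sum_range_one]
      have hF0 : F 0 = k (w ⟨0, hn⟩) - (b : ℤ) := by
        rw [hF_def]; simp only []; rw [dif_pos hn, hprev0 hn]
      rw [hF0]; push_cast; ring
    | succ n ih =>
      intro hn
      have hFn : F (n + 1) = k (w ⟨n + 1, hn⟩) - (k (w ⟨n, Nat.lt_of_succ_lt hn⟩) + c) := by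
        rw [hF_def]; simp only []; rw [dif_pos hn, hprevS n hn]
      rw [Finset.sum_range_succ, ih (Nat.lt_of_succ_lt hn), hFn]
      push_cast; ring
  have hlast : s - 1 < s := by omega
  have hcast : ((∑ j, tt j : ℕ) : ℤ) = ∑ j : Fin s, ((tt j : ℤ)) := by push_cast; rfl
  have hsumtotal : ((∑ j, tt j : ℕ) : ℤ)
      = k (w ⟨s - 1, hlast⟩) - (b : ℤ) - ((s - 1 : ℕ) : ℤ) * c := by
    have h1' := claim (s - 1) hlast
    rw [show s - 1 + 1 = s from by omega] at h1'
    rw [hcast, hsum2, h1']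
  have htt0 : 0 < tt ⟨0, hs⟩ := by
    have h1' := (key ⟨0, hs⟩).1
    rw [hprev0 hs] at h1'
    have := hb (w ⟨0, hs⟩)
    omega
  refine ⟨w, tt, ?_, ?_, ?_, ?_, htt0, ?_⟩
  · have h1' := (key ⟨0, hs⟩).1
    rw [hprev0 hs] at h1'
    omega
  · intro j hj
    have h1' := (key ⟨j + 1, hj⟩).1
    rw [hprevS j hj] at h1'
    omega
  · exact le_trans htt0 (Finset.single_le_sum (fun i _ => Nat.zero_le _) (Finset.mem_univ (⟨0, hs⟩ : Fin s)))
  · have hup := (hk (w ⟨s - 1, hlast⟩)).2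
    push_cast at hup
    have : ((∑ j, tt j : ℕ) : ℤ) ≤ (t : ℤ) := by
      rw [hsumtotal]; linarith
    exact_mod_cast this
  · intro j hj hlt
    have h5 := (hcons j hj).2 hlt
    have h1' := (key ⟨j + 1, hj⟩).1
    rw [hprevS j hj] at h1'
    omega
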